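/- Let (A, R) be a Rota–Baxter algebra of weight λ ≠ 0 over a field K of characteristic zero. Let A⟦t⟧ be the ring of formal power series in a central variable t with coefficients in A, with R extended coefficientwise to R̂ : A⟦t⟧ → A⟦t⟧; then A⟦t⟧ with the filtration (tⁿA⟦t⟧)ₙ is a complete filtered Rota–Baxter algebra of weight λ, and there is a unique map χ_λ : tA⟦t⟧ → tA⟦t⟧ with (χ_λ − id)(tⁿA⟦t⟧) ⊆ t²ⁿA⟦t⟧ for all n ≥ 1 and exp(R̂(χ_λ(u)))·exp(R̃̂(χ_λ(u))) = exp(−λu) for all u ∈ tA⟦t⟧, where R̃̂ := −λ·id − R̂. Then for every a ∈ A, the element X := exp( R̂( χ_λ( λ⁻¹·log(1 + λ t a) ) ) ) of A⟦t⟧ satisfies the fixed point equation X = 1 + t·R̂(aX) (non-commutative Spitzer identity). -/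

import Mathlib

open PowerSeries

variable (K : Type*) {A : Type*} [Field K] [CharZero K] [Ring A] [Algebra K A]

/-- The coefficientwise extension `R̂` of a linear map `R : A → A` to `A⟦t⟧`. -/
noncomputable def hatR (R : A →ₗ[K] A) (f : PowerSeries A) : PowerSeries A :=
  PowerSeries.mk fun n => R (PowerSeries.coeff n f)

/-- The `t`-adic exponential on `t·A⟦t⟧`: for `f` with zero constant term this is
`Σ_{k≥0} f^k / k!` (the `n`-th coefficient only receives contributions from `k ≤ n`). -/
noncomputable def expPS (f : PowerSeries A) : PowerSeries A :=
  PowerSeries.mk fun n => ∑ k ∈ Finset.range (n + 1),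
    ((k.factorial : K)⁻¹) • PowerSeries.coeff n (f ^ k)

/-- The `t`-adic logarithm on `1 + t·A⟦t⟧`: for `g = 1 + u` with `u` of zero constant term this
is `Σ_{k≥1} (-1)^{k-1} u^k / k` (the `k = 0` term vanishes since `1/0 = 0` in `K`). -/
noncomputable def logPS (g : PowerSeries A) : PowerSeries A :=
  PowerSeries.mk fun n => ∑ k ∈ Finset.range (n + 1),
    (((-1 : K) ^ (k - 1)) / (k : K)) • PowerSeries.coeff n ((g - 1) ^ k)

namespace SpitzerAux


section Fil

variable {B : Type*} [Ring B]

/-- `f ∈ tⁿ B⟦t⟧`. -/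
def filP (n : ℕ) (f : PowerSeries B) : Prop := ∀ k < n, PowerSeries.coeff k f = 0

theorem filP_mono {m n : ℕ} (h : m ≤ n) {f : PowerSeries B} (hf : filP n f) : filP m f :=
  fun k hk => hf k (lt_of_lt_of_le hk h)

theorem filP_zero (n : ℕ) : filP n (0 : PowerSeries B) := fun k _ => map_zero _

theorem filP_top (f : PowerSeries B) : filP 0 f := fun k hk => absurd hk (Nat.not_lt_zero k)

theorem filP_add {n : ℕ} {f g : PowerSeries B} (hf : filP n f) (hg : filP n g) :
    filP n (f + g) := fun k hk => by rw [map_add, hf k hk, hg k hk, add_zero]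

theorem filP_neg {n : ℕ} {f : PowerSeries B} (hf : filP n f) : filP n (-f) :=
  fun k hk => by rw [map_neg, hf k hk, neg_zero]

theorem filP_sub {n : ℕ} {f g : PowerSeries B} (hf : filP n f) (hg : filP n g) :
    filP n (f - g) := by rw [sub_eq_add_neg]; exact filP_add hf (filP_neg hg)

theorem filP_smul {R0 : Type*} [Semiring R0] [Module R0 B] (c : R0) {n : ℕ} {f : PowerSeries B}
    (hf : filP n f) : filP n (c • f) :=
  fun k hk => by rw [PowerSeries.coeff_smul, hf k hk, smul_zero]

theorem filP_of_smul {c : K} (hc : c ≠ 0) {n : ℕ} {f : PowerSeries B} [Module K B]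
    (hf : filP n (c • f)) : filP n f := by
  intro k hk
  have := hf k hk
  rw [PowerSeries.coeff_smul] at this
  have h2 := congrArg (fun y => c⁻¹ • y) this
  simpa [smul_smul, inv_mul_cancel₀ hc] using h2

theorem filP_mul {m n : ℕ} {f g : PowerSeries B} (hf : filP m f) (hg : filP n g) :
    filP (m + n) (f * g) := by
  intro k hk
  rw [PowerSeries.coeff_mul]
  apply Finset.sum_eq_zero
  rintro ⟨i, j⟩ hij
  rw [Finset.HasAntidiagonal.mem_antidiagonal] at hij
  rcases lt_or_ge i m with hi | hi
  · rw [hf i hi, zero_mul]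
  · have : j < n := by omega
    rw [hg j this, mul_zero]

theorem filP_mul_left {n : ℕ} (g : PowerSeries B) {f : PowerSeries B} (hf : filP n f) :
    filP n (g * f) := by
  have := filP_mul (filP_top g) hf
  rwa [zero_add] at this

theorem filP_mul_right {n : ℕ} (g : PowerSeries B) {f : PowerSeries B} (hf : filP n f) :
    filP n (f * g) := by
  have := filP_mul hf (filP_top g)
  rwa [add_zero] at this

theorem filP_pow {f : PowerSeries B} (h : filP 1 f) (k : ℕ) : filP k (f ^ k) := by
  induction k with
  | zero => exact filP_top _
  | succ k ih =>
      rw [pow_succ]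
      exact filP_mul ih h

theorem coeff_pow_eq_zero {f : PowerSeries B} (h : PowerSeries.coeff 0 f = 0) {n k : ℕ}
    (hnk : n < k) : PowerSeries.coeff n (f ^ k) = 0 :=
  filP_pow (fun j hj => by interval_cases j; exact h) k n hnk

theorem filP_eq_zero {f : PowerSeries B} (h : ∀ n, filP n f) : f = 0 := by
  ext n
  simpa using h (n + 1) n (Nat.lt_succ_self n)

theorem eq_of_forall_filP_sub {f g : PowerSeries B} (h : ∀ n, filP n (f - g)) : f = g :=
  sub_eq_zero.mp (filP_eq_zero h)

end Fil

section FixedPoint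

variable {B : Type*} [Ring B]

/-- fixed point of a contraction on `B⟦t⟧`. -/
noncomputable def fp (F : PowerSeries B → PowerSeries B) : PowerSeries B :=
  PowerSeries.mk fun n => PowerSeries.coeff n (F^[n + 1] 0)

/-- contraction property -/
def Contr (F : PowerSeries B → PowerSeries B) : Prop :=
  ∀ n (f g : PowerSeries B), filP n (f - g) → filP (n + 1) (F f - F g)

theorem contr_coeff {F : PowerSeries B → PowerSeries B} (H : Contr F) {n : ℕ}
    {f g : PowerSeries B} (hfg : ∀ j < n, PowerSeries.coeff j f = PowerSeries.coeff j g) :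
    ∀ k ≤ n, PowerSeries.coeff k (F f) = PowerSeries.coeff k (F g) := by
  intro k hk
  have h1 : filP n (f - g) := fun j hj => by rw [map_sub, hfg j hj, sub_self]
  have h2 := H n f g h1 k (Nat.lt_succ_of_le hk)
  rw [map_sub, sub_eq_zero] at h2
  exact h2

theorem fp_claim {F : PowerSeries B → PowerSeries B} (H : Contr F) :
    ∀ m k, k < m → PowerSeries.coeff k (F^[m] 0) = PowerSeries.coeff k (F^[k + 1] 0) := by
  intro m
  induction m using Nat.strong_induction_on with
  | _ m ih =>
    intro k hk
    match m, hk with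
    | m + 1, hk =>
      rw [Function.iterate_succ_apply', Function.iterate_succ_apply']
      apply contr_coeff H _ k le_rfl
      intro j hj
      have hjm : j < m := by omega
      rw [ih m (Nat.lt_succ_self m) j hjm, ih k (by omega) j hj]

theorem fp_fixed {F : PowerSeries B → PowerSeries B} (H : Contr F) : F (fp F) = fp F := by
  ext n
  have h1 : PowerSeries.coeff n (fp F) = PowerSeries.coeff n (F^[n + 1] 0) :=
    PowerSeries.coeff_mk _ _
  rw [h1, Function.iterate_succ_apply']
  apply contr_coeff H _ n le_rfl
  intro j hj
  rw [show PowerSeries.coeff j (fp F) = PowerSeries.coeff j (F^[j + 1] 0) from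
    PowerSeries.coeff_mk _ _, fp_claim H n j hj]

theorem fp_unique {F : PowerSeries B → PowerSeries B} (H : Contr F) {f g : PowerSeries B}
    (hf : F f = f) (hg : F g = g) : f = g := by
  apply eq_of_forall_filP_sub
  intro n
  induction n using Nat.strong_induction_on with
  | _ n ih =>
    intro k hk
    have h1 : filP k (f - g) := fun j hj => ih k hk j hj
    have h2 := H k f g h1 k (Nat.lt_succ_self k)
    rwa [hf, hg] at h2

end FixedPoint


section ExpBasics
variable {K : Type*} [Field K] [CharZero K] {B : Type*} [Ring B] [Algebra K B]


theorem coeff_zero_expPS (f : PowerSeries B) : PowerSeries.coeff 0 (expPS K f) = 1 := by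
  simp [expPS]

/-- alternating binomial sum in `K`. -/
theorem alt_sum_K (m : ℕ) :
    ∑ l ∈ Finset.range (m + 1), (((m - l).factorial : K)⁻¹ * ((-1 : K) ^ l * (l.factorial : K)⁻¹))
      = if m = 0 then 1 else 0 := by
  have key : ∀ l ∈ Finset.range (m + 1),
      (((m - l).factorial : K)⁻¹ * ((-1 : K) ^ l * (l.factorial : K)⁻¹))
        = (-1 : K) ^ l * (m.choose l : K) / (m.factorial : K) := by
    intro l hl
    rw [Finset.mem_range] at hl
    have hlm : l ≤ m := by omega
    have h1 : ((m.choose l : K)) = (m.factorial : K) / ((l.factorial : K) * ((m - l).factorial : K)) :=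
      Nat.cast_choose K hlm
    have hm : (m.factorial : K) ≠ 0 := Nat.cast_ne_zero.mpr m.factorial_ne_zero
    have hl' : (l.factorial : K) ≠ 0 := Nat.cast_ne_zero.mpr l.factorial_ne_zero
    have hml : ((m - l).factorial : K) ≠ 0 := Nat.cast_ne_zero.mpr (m - l).factorial_ne_zero
    field_simp [h1]
    norm_cast; rw [← Nat.choose_mul_factorial_mul_factorial hlm]; ring
  rw [Finset.sum_congr rfl key]
  have h2 : ∑ l ∈ Finset.range (m + 1), (-1 : K) ^ l * (m.choose l : K) / (m.factorial : K)
      = (∑ l ∈ Finset.range (m + 1), (-1 : K) ^ l * (m.choose l : K)) / (m.factorial : K) := by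
    rw [Finset.sum_div]
  rw [h2]
  have h3 : (∑ l ∈ Finset.range (m + 1), (-1 : K) ^ l * (m.choose l : K))
      = ((if m = 0 then 1 else 0 : ℤ) : K) := by
    rw [← Int.alternating_sum_range_choose]
    push_cast
    rfl
  rw [h3]
  split
  · next hm => subst hm; norm_num [Nat.factorial]
  · simp

theorem expPS_mul_neg {f : PowerSeries B} (hf : PowerSeries.coeff 0 f = 0) :
    expPS K f * expPS K (-f) = 1 := by
  ext n
  rw [PowerSeries.coeff_mul]
  have hcf : ∀ i, i ≤ n → PowerSeries.coeff i (expPS K f)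
      = ∑ k ∈ Finset.range (n + 1), ((k.factorial : K)⁻¹) • PowerSeries.coeff i (f ^ k) := by
    intro i hi
    rw [expPS, PowerSeries.coeff_mk]
    apply Finset.sum_subset
    · intro x hx; rw [Finset.mem_range] at hx ⊢; omega
    · intro k _ hk2
      rw [Finset.mem_range, not_lt] at hk2
      rw [coeff_pow_eq_zero hf (by omega), smul_zero]
  have hnegpow : ∀ (i l : ℕ), PowerSeries.coeff i ((-f) ^ l)
      = ((-1 : K) ^ l) • PowerSeries.coeff i (f ^ l) := by
    intro i l
    have : (-f) = (-1 : K) • f := by rw [neg_smul, one_smul]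
    rw [this, smul_pow, PowerSeries.coeff_smul]
  have hcg : ∀ i, i ≤ n → PowerSeries.coeff i (expPS K (-f))
      = ∑ l ∈ Finset.range (n + 1),
          ((-1 : K) ^ l * (l.factorial : K)⁻¹) • PowerSeries.coeff i (f ^ l) := by
    intro i hi
    rw [expPS, PowerSeries.coeff_mk]
    have : ∀ l ∈ Finset.range (i + 1),
        ((l.factorial : K)⁻¹) • PowerSeries.coeff i ((-f) ^ l)
          = ((-1 : K) ^ l * (l.factorial : K)⁻¹) • PowerSeries.coeff i (f ^ l) := by
      intro l _
      rw [hnegpow, smul_smul, mul_comm]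
    rw [Finset.sum_congr rfl this]
    apply Finset.sum_subset
    · intro x hx; rw [Finset.mem_range] at hx ⊢; omega
    · intro k _ hk2
      rw [Finset.mem_range, not_lt] at hk2
      rw [coeff_pow_eq_zero hf (by omega), smul_zero]
  calc
    ∑ p ∈ Finset.HasAntidiagonal.antidiagonal n,
        PowerSeries.coeff p.1 (expPS K f) * PowerSeries.coeff p.2 (expPS K (-f))
      = ∑ p ∈ Finset.HasAntidiagonal.antidiagonal n, ∑ k ∈ Finset.range (n + 1), ∑ l ∈ Finset.range (n + 1),
          ((k.factorial : K)⁻¹ * ((-1 : K) ^ l * (l.factorial : K)⁻¹)) •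
            (PowerSeries.coeff p.1 (f ^ k) * PowerSeries.coeff p.2 (f ^ l)) := by
        apply Finset.sum_congr rfl
        rintro ⟨i, j⟩ hij
        rw [Finset.HasAntidiagonal.mem_antidiagonal] at hij
        rw [hcf i (by omega), hcg j (by omega), Finset.sum_mul_sum]
        apply Finset.sum_congr rfl; intro k _
        apply Finset.sum_congr rfl; intro l _
        rw [smul_mul_smul_comm]
    _ = ∑ k ∈ Finset.range (n + 1), ∑ l ∈ Finset.range (n + 1),
          ((k.factorial : K)⁻¹ * ((-1 : K) ^ l * (l.factorial : K)⁻¹)) •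
            PowerSeries.coeff n (f ^ (k + l)) := by
        rw [Finset.sum_comm]
        apply Finset.sum_congr rfl; intro k _
        rw [Finset.sum_comm]
        apply Finset.sum_congr rfl; intro l _
        rw [← Finset.smul_sum, ← PowerSeries.coeff_mul, ← pow_add]
    _ = ∑ p ∈ (Finset.range (n + 1)) ×ˢ (Finset.range (n + 1)),
          ((p.1.factorial : K)⁻¹ * ((-1 : K) ^ p.2 * (p.2.factorial : K)⁻¹)) •
            PowerSeries.coeff n (f ^ (p.1 + p.2)) := by
        rw [Finset.sum_product]
    _ = ∑ m ∈ Finset.range (2 * n + 1),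
          ∑ p ∈ ((Finset.range (n + 1)) ×ˢ (Finset.range (n + 1))).filter
              (fun p => p.1 + p.2 = m),
            ((p.1.factorial : K)⁻¹ * ((-1 : K) ^ p.2 * (p.2.factorial : K)⁻¹)) •
              PowerSeries.coeff n (f ^ (p.1 + p.2)) := by
        rw [Finset.sum_fiberwise_of_maps_to]
        intro p hp
        rw [Finset.mem_product] at hp
        rw [Finset.mem_range] at hp ⊢
        have := hp.1; have := hp.2
        rw [Finset.mem_range] at *
        omega
    _ = ∑ m ∈ Finset.range (2 * n + 1),
          (if m = 0 then PowerSeries.coeff n (1 : PowerSeries B) else 0) := by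
        apply Finset.sum_congr rfl
        intro m _
        by_cases hmn : m ≤ n
        · have hfib : ∀ p ∈ ((Finset.range (n + 1)) ×ˢ (Finset.range (n + 1))).filter
              (fun p => p.1 + p.2 = m),
              ((p.1.factorial : K)⁻¹ * ((-1 : K) ^ p.2 * (p.2.factorial : K)⁻¹)) •
                PowerSeries.coeff n (f ^ (p.1 + p.2))
              = ((p.1.factorial : K)⁻¹ * ((-1 : K) ^ p.2 * (p.2.factorial : K)⁻¹)) •
                PowerSeries.coeff n (f ^ m) := by
            intro p hp
            rw [Finset.mem_filter] at hp
            rw [hp.2]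
          rw [Finset.sum_congr rfl hfib, ← Finset.sum_smul]
          have hbij : ∑ p ∈ ((Finset.range (n + 1)) ×ˢ (Finset.range (n + 1))).filter
              (fun p => p.1 + p.2 = m),
              ((p.1.factorial : K)⁻¹ * ((-1 : K) ^ p.2 * (p.2.factorial : K)⁻¹))
              = ∑ l ∈ Finset.range (m + 1),
                  (((m - l).factorial : K)⁻¹ * ((-1 : K) ^ l * (l.factorial : K)⁻¹)) := by
            apply Finset.sum_bij' (fun p _ => p.2) (fun l _ => (m - l, l))
            · intro p hp
              rw [Finset.mem_filter, Finset.mem_product] at hp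
              rw [Finset.mem_range]; omega
            · intro l hl
              rw [Finset.mem_range] at hl
              rw [Finset.mem_filter, Finset.mem_product, Finset.mem_range, Finset.mem_range]
              omega
            · intro p hp
              rw [Finset.mem_filter] at hp
              have := hp.2
              ext <;> simp <;> omega
            · intro l hl; rfl
            · intro p hp
              rw [Finset.mem_filter] at hp
              have h2 : p.1 = m - p.2 := by omega
              rw [h2]
          rw [hbij, alt_sum_K]
          split
          · next hm0 => subst hm0; rw [one_smul, pow_zero]
          · rw [zero_smul]
        · have : ∀ p ∈ ((Finset.range (n + 1)) ×ˢ (Finset.range (n + 1))).filter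
              (fun p => p.1 + p.2 = m),
              ((p.1.factorial : K)⁻¹ * ((-1 : K) ^ p.2 * (p.2.factorial : K)⁻¹)) •
                PowerSeries.coeff n (f ^ (p.1 + p.2)) = 0 := by
            intro p hp
            rw [Finset.mem_filter] at hp
            rw [coeff_pow_eq_zero hf (by omega), smul_zero]
          rw [Finset.sum_congr rfl this, Finset.sum_const, smul_zero]
          have : ¬ m = 0 := by omega
          rw [if_neg this]
    _ = PowerSeries.coeff n (1 : PowerSeries B) := by
        rw [Finset.sum_ite_eq' (Finset.range (2 * n + 1)) 0
          (fun _ => PowerSeries.coeff n (1 : PowerSeries B))]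
        rw [if_pos (by rw [Finset.mem_range]; omega)]

end ExpBasics


variable {K : Type*} [Field K] [CharZero K]

section Trunc
variable {B : Type*} [Ring B] [Algebra K B]

theorem coeff_zero_logPS (g : PowerSeries B) : PowerSeries.coeff 0 (logPS K g) = 0 := by
  simp [logPS]

theorem expPS_trunc {f : PowerSeries B} (hf : PowerSeries.coeff 0 f = 0) {N n : ℕ}
    (hn : n < N) : PowerSeries.coeff n (expPS K f)
      = PowerSeries.coeff n (∑ k ∈ Finset.range N, ((k.factorial : K)⁻¹) • f ^ k) := by
  rw [expPS, PowerSeries.coeff_mk, map_sum]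
  simp_rw [PowerSeries.coeff_smul]
  apply Finset.sum_subset
  · intro x hx; rw [Finset.mem_range] at hx ⊢; omega
  · intro k _ hk2
    rw [Finset.mem_range, not_lt] at hk2
    rw [coeff_pow_eq_zero hf (by omega), smul_zero]

theorem logPS_trunc {ξ : PowerSeries B} (hξ : PowerSeries.coeff 0 ξ = 0) {N n : ℕ}
    (hn : n < N) : PowerSeries.coeff n (logPS K (1 + ξ))
      = PowerSeries.coeff n (∑ k ∈ Finset.range N, (((-1 : K) ^ (k - 1)) / (k : K)) • ξ ^ k) := by
  rw [logPS, PowerSeries.coeff_mk, map_sum]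
  simp_rw [PowerSeries.coeff_smul, add_sub_cancel_left]
  apply Finset.sum_subset
  · intro x hx; rw [Finset.mem_range] at hx ⊢; omega
  · intro k _ hk2
    rw [Finset.mem_range, not_lt] at hk2
    rw [coeff_pow_eq_zero hξ (by omega), smul_zero]

theorem filP_expPS_sub_trunc {f : PowerSeries B} (hf : PowerSeries.coeff 0 f = 0) (N : ℕ) :
    filP N (expPS K f - ∑ k ∈ Finset.range N, ((k.factorial : K)⁻¹) • f ^ k) := by
  intro n hn
  rw [map_sub, expPS_trunc hf hn, sub_self]

theorem filP_logPS_sub_trunc {ξ : PowerSeries B} (hξ : PowerSeries.coeff 0 ξ = 0) (N : ℕ) :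
    filP N (logPS K (1 + ξ) - ∑ k ∈ Finset.range N,
      (((-1 : K) ^ (k - 1)) / (k : K)) • ξ ^ k) := by
  intro n hn
  rw [map_sub, logPS_trunc hξ hn, sub_self]

end Trunc

section Deriv

theorem filP_derivative {N : ℕ} {f : PowerSeries K} (hf : filP (N + 1) f) :
    filP N (PowerSeries.derivative K f) := by
  intro n hn
  rw [PowerSeries.coeff_derivative, hf (n + 1) (by omega), zero_mul]

theorem deriv_log {ξ : PowerSeries K} (hξ : PowerSeries.coeff 0 ξ = 0) :
    (1 + ξ) * (PowerSeries.derivative K (logPS K (1 + ξ))) = PowerSeries.derivative K ξ := by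
  apply eq_of_forall_filP_sub
  intro N
  set L := logPS K (1 + ξ) with hL
  set LN := ∑ k ∈ Finset.range (N + 2), (((-1 : K) ^ (k - 1)) / (k : K)) • ξ ^ k with hLN
  have h1 : filP (N + 1) (L - LN) := filP_mono (Nat.le_succ _) (filP_logPS_sub_trunc hξ (N + 2))
  have h2 : filP N (PowerSeries.derivative K L - PowerSeries.derivative K LN) := by
    rw [← map_sub]; exact filP_derivative h1
  have h3 : filP N ((1 + ξ) * PowerSeries.derivative K L
      - (1 + ξ) * PowerSeries.derivative K LN) := by
    rw [← mul_sub]; exact filP_mul_left _ h2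
  have hDLN : PowerSeries.derivative K LN
      = (∑ i ∈ Finset.range (N + 1), (-ξ) ^ i) * PowerSeries.derivative K ξ := by
    rw [hLN, map_sum]
    rw [Finset.sum_range_succ']
    have hz : (PowerSeries.derivative K) ((((-1 : K) ^ (0 - 1)) / ((0 : ℕ) : K)) • ξ ^ 0) = 0 := by
      simp
    rw [hz, add_zero, Finset.sum_mul]
    apply Finset.sum_congr rfl
    intro i _
    rw [Derivation.map_smul, Derivation.leibniz_pow]
    have hcoef : (((-1 : K) ^ ((i + 1) - 1)) / (((i + 1 : ℕ)) : K)) •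
        ((i + 1) • (ξ ^ ((i + 1) - 1) • (PowerSeries.derivative K ξ)))
        = (-1 : K) ^ i • (ξ ^ i * PowerSeries.derivative K ξ) := by
      rw [Nat.add_sub_cancel]
      rw [← Nat.cast_smul_eq_nsmul K (i + 1), smul_smul, smul_eq_mul]
      congr 1
      · rw [div_mul_cancel₀]
        exact Nat.cast_ne_zero.mpr (Nat.succ_ne_zero i)
    rw [hcoef]
    have : (-ξ) ^ i = (-1 : K) ^ i • ξ ^ i := by
      rw [show -ξ = (-1 : K) • ξ by rw [neg_smul, one_smul], smul_pow]
    rw [this, smul_mul_assoc]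
  have hgeom : (∑ i ∈ Finset.range (N + 1), (-ξ) ^ i) * (1 + ξ) = 1 - (-ξ) ^ (N + 1) := by
    have := geom_sum_mul (-ξ) (N + 1)
    have h4 : (∑ i ∈ Finset.range (N + 1), (-ξ) ^ i) * (1 + ξ)
        = -((∑ i ∈ Finset.range (N + 1), (-ξ) ^ i) * (-ξ - 1)) := by ring
    rw [h4, this]; ring
  have h5 : filP N ((1 + ξ) * PowerSeries.derivative K LN - PowerSeries.derivative K ξ) := by
    have : (1 + ξ) * PowerSeries.derivative K LN - PowerSeries.derivative K ξ
        = -((-ξ) ^ (N + 1) * PowerSeries.derivative K ξ) := by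
      rw [hDLN]
      have : (1 + ξ) * ((∑ i ∈ Finset.range (N + 1), (-ξ) ^ i) * PowerSeries.derivative K ξ)
          = ((∑ i ∈ Finset.range (N + 1), (-ξ) ^ i) * (1 + ξ)) * PowerSeries.derivative K ξ := by
        ring
      rw [this, hgeom]; ring
    rw [this]
    apply filP_neg
    apply filP_mono (Nat.le_succ N)
    apply filP_mul_right
    exact filP_pow (fun k hk => by interval_cases k; rw [map_neg, hξ, neg_zero]) (N + 1)
  have h6 := filP_add h3 h5
  rwa [sub_add_sub_cancel] at h6

theorem deriv_exp {f : PowerSeries K} (hf : PowerSeries.coeff 0 f = 0) :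
    PowerSeries.derivative K (expPS K f) = expPS K f * PowerSeries.derivative K f := by
  apply eq_of_forall_filP_sub
  intro N
  set EN := ∑ k ∈ Finset.range (N + 2), ((k.factorial : K)⁻¹) • f ^ k with hEN
  have h1 : filP (N + 1) (expPS K f - EN) := filP_mono (Nat.le_succ _) (filP_expPS_sub_trunc hf (N + 2))
  have h2 : filP N (PowerSeries.derivative K (expPS K f) - PowerSeries.derivative K EN) := by
    rw [← map_sub]; exact filP_derivative h1
  have hDEN : PowerSeries.derivative K EN
      = (∑ i ∈ Finset.range (N + 1), ((i.factorial : K)⁻¹) • f ^ i)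
        * PowerSeries.derivative K f := by
    rw [hEN, map_sum, Finset.sum_range_succ']
    have hz : (PowerSeries.derivative K) ((((0:ℕ).factorial : K)⁻¹) • f ^ 0) = 0 := by
      simp
    rw [hz, add_zero, Finset.sum_mul]
    apply Finset.sum_congr rfl
    intro i _
    rw [Derivation.map_smul, Derivation.leibniz_pow, Nat.add_sub_cancel]
    rw [← Nat.cast_smul_eq_nsmul K (i + 1), smul_smul, smul_eq_mul]
    rw [smul_mul_assoc]
    congr 1
    rw [Nat.factorial_succ]
    push_cast
    have hi : ((i.factorial : K)) ≠ 0 := Nat.cast_ne_zero.mpr i.factorial_ne_zero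
    have hi1 : ((i : K) + 1) ≠ 0 := by
      have : ((i + 1 : ℕ) : K) ≠ 0 := Nat.cast_ne_zero.mpr (Nat.succ_ne_zero i)
      push_cast at this; exact this
    field_simp
  have h3 : filP N (PowerSeries.derivative K EN - expPS K f * PowerSeries.derivative K f) := by
    rw [hDEN, ← sub_mul]
    apply filP_mul_right
    have h4 : filP (N + 1) ((∑ i ∈ Finset.range (N + 1), ((i.factorial : K)⁻¹) • f ^ i)
        - expPS K f) := by
      have := filP_neg (filP_expPS_sub_trunc (K := K) hf (N + 1))
      rwa [neg_sub] at this
    exact filP_mono (Nat.le_succ N) h4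
  have h6 := filP_add h2 h3
  rwa [sub_add_sub_cancel] at h6

theorem exp_log {ξ : PowerSeries K} (hξ : PowerSeries.coeff 0 ξ = 0) :
    expPS K (logPS K (1 + ξ)) = 1 + ξ := by
  set L := logPS K (1 + ξ) with hLdef
  have hL0 : PowerSeries.coeff 0 L = 0 := coeff_zero_logPS _
  set E := expPS K L with hEdef
  have hu : constantCoeff (1 + ξ) ≠ 0 := by
    rw [map_add, map_one]
    rw [← PowerSeries.coeff_zero_eq_constantCoeff_apply, hξ, add_zero]
    exact one_ne_zero
  have hmul : (1 + ξ) * (1 + ξ)⁻¹ = 1 := PowerSeries.mul_inv_cancel _ hu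
  have hmul' : (1 + ξ)⁻¹ * (1 + ξ) = 1 := by rw [mul_comm]; exact hmul
  have hDL : PowerSeries.derivative K L = (1 + ξ)⁻¹ * PowerSeries.derivative K ξ := by
    have := deriv_log hξ
    calc PowerSeries.derivative K L
        = ((1 + ξ)⁻¹ * (1 + ξ)) * PowerSeries.derivative K L := by rw [hmul', one_mul]
      _ = (1 + ξ)⁻¹ * ((1 + ξ) * PowerSeries.derivative K L) := by ring
      _ = (1 + ξ)⁻¹ * PowerSeries.derivative K ξ := by rw [this]
  have hDiv : PowerSeries.derivative K ((1 + ξ)⁻¹)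
      = -(1 + ξ)⁻¹ ^ 2 * PowerSeries.derivative K ξ := by
    rw [PowerSeries.derivative_inv']
    congr 1
    rw [map_add]
    simp
  have hDE : PowerSeries.derivative K E = E * ((1 + ξ)⁻¹ * PowerSeries.derivative K ξ) := by
    rw [hEdef, deriv_exp hL0, hDL]
  have hDh : PowerSeries.derivative K (E * (1 + ξ)⁻¹) = 0 := by
    rw [Derivation.leibniz, hDiv, hDE, smul_eq_mul, smul_eq_mul]
    ring
  have hh : E * (1 + ξ)⁻¹ = 1 := by
    apply PowerSeries.derivative.ext
    · rw [hDh, Derivation.map_one_eq_zero]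
    · rw [map_mul, PowerSeries.constantCoeff_inv]
      rw [← PowerSeries.coeff_zero_eq_constantCoeff_apply, coeff_zero_expPS]
      rw [show constantCoeff (1 + ξ) = 1 by
        rw [map_add, map_one, ← PowerSeries.coeff_zero_eq_constantCoeff_apply, hξ, add_zero]]
      simp
  calc E = E * ((1 + ξ)⁻¹ * (1 + ξ)) := by rw [hmul', mul_one]
    _ = (E * (1 + ξ)⁻¹) * (1 + ξ) := by ring
    _ = 1 + ξ := by rw [hh, one_mul]

theorem exp_neg_log_mul {ξ : PowerSeries K} (hξ : PowerSeries.coeff 0 ξ = 0) :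
    expPS K (-(logPS K (1 + ξ))) * (1 + ξ) = 1 := by
  have h1 : expPS K (logPS K (1 + ξ)) * expPS K (-(logPS K (1 + ξ))) = 1 :=
    expPS_mul_neg (coeff_zero_logPS _)
  rw [exp_log hξ] at h1
  rw [mul_comm]
  exact h1

end Deriv

end SpitzerAux


namespace SpitzerAux

section Theta
variable {K : Type*} [Field K] [CharZero K] {A : Type*} [Ring A] [Algebra K A]

/-- substitution `x ↦ a·t` as a map `K⟦x⟧ → A⟦t⟧`. -/
noncomputable def theta (a : A) (f : PowerSeries K) : PowerSeries A :=
  PowerSeries.mk fun n => (PowerSeries.coeff n f) • (a ^ n)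

theorem coeff_theta (a : A) (f : PowerSeries K) (n : ℕ) :
    PowerSeries.coeff n (theta a f) = (PowerSeries.coeff n f) • (a ^ n) :=
  PowerSeries.coeff_mk _ _

theorem theta_one (a : A) : theta a (1 : PowerSeries K) = 1 := by
  ext n
  rw [coeff_theta, PowerSeries.coeff_one, PowerSeries.coeff_one]
  split
  · next h => subst h; rw [pow_zero, one_smul]
  · rw [zero_smul]

theorem theta_add (a : A) (f g : PowerSeries K) :
    theta a (f + g) = theta a f + theta a g := by
  ext n
  rw [map_add, coeff_theta, coeff_theta, coeff_theta, map_add, add_smul]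

theorem theta_neg (a : A) (f : PowerSeries K) : theta a (-f) = -(theta a f) := by
  ext n
  rw [map_neg, coeff_theta, coeff_theta, map_neg, neg_smul]

theorem theta_smul (a : A) (c : K) (f : PowerSeries K) : theta a (c • f) = c • theta a f := by
  ext n
  rw [PowerSeries.coeff_smul, coeff_theta, coeff_theta, PowerSeries.coeff_smul, smul_assoc]

theorem theta_mul (a : A) (f g : PowerSeries K) :
    theta a (f * g) = theta a f * theta a g := by
  ext n
  rw [coeff_theta, PowerSeries.coeff_mul, PowerSeries.coeff_mul, Finset.sum_smul]
  apply Finset.sum_congr rfl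
  rintro ⟨i, j⟩ hij
  rw [Finset.HasAntidiagonal.mem_antidiagonal] at hij
  rw [coeff_theta, coeff_theta, smul_mul_smul_comm, ← pow_add, hij]

theorem theta_pow (a : A) (f : PowerSeries K) (k : ℕ) : theta a (f ^ k) = (theta a f) ^ k := by
  induction k with
  | zero => rw [pow_zero, pow_zero, theta_one]
  | succ k ih => rw [pow_succ, pow_succ, theta_mul, ih]

theorem theta_expPS (a : A) (f : PowerSeries K) : theta a (expPS K f) = expPS K (theta a f) := by
  ext n
  rw [coeff_theta, expPS, expPS, PowerSeries.coeff_mk, PowerSeries.coeff_mk, Finset.sum_smul]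
  apply Finset.sum_congr rfl
  intro k _
  rw [← theta_pow, coeff_theta, smul_assoc]

theorem theta_logPS (a : A) (ξ : PowerSeries K) :
    theta a (logPS K (1 + ξ)) = logPS K (1 + theta a ξ) := by
  ext n
  rw [coeff_theta, logPS, logPS, PowerSeries.coeff_mk, PowerSeries.coeff_mk, Finset.sum_smul]
  apply Finset.sum_congr rfl
  intro k _
  rw [add_sub_cancel_left, add_sub_cancel_left, ← theta_pow, coeff_theta, smul_assoc]

theorem theta_X (a : A) : theta a (PowerSeries.X : PowerSeries K)
    = PowerSeries.C a * PowerSeries.X := by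
  ext n
  rw [coeff_theta, PowerSeries.coeff_X, PowerSeries.coeff_C_mul, PowerSeries.coeff_X]
  split
  · next h => subst h; rw [pow_one, one_smul, mul_one]
  · rw [zero_smul, mul_zero]

end Theta

end SpitzerAux

namespace SpitzerAux

section Main
variable {K : Type*} [Field K] [CharZero K] {A : Type*} [Ring A] [Algebra K A]
variable (K)
variable (lam : K) (R : A →ₗ[K] A)

theorem coeff_hatR (f : PowerSeries A) (n : ℕ) :
    PowerSeries.coeff n (hatR K R f) = R (PowerSeries.coeff n f) :=
  PowerSeries.coeff_mk _ _

theorem hatR_add (f g : PowerSeries A) : hatR K R (f + g) = hatR K R f + hatR K R g := by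
  ext n; rw [map_add, coeff_hatR, coeff_hatR, coeff_hatR, map_add, map_add]

theorem hatR_sub (f g : PowerSeries A) : hatR K R (f - g) = hatR K R f - hatR K R g := by
  ext n; rw [map_sub, coeff_hatR, coeff_hatR, coeff_hatR, map_sub, map_sub]

theorem filP_hatR {n : ℕ} {f : PowerSeries A} (hf : filP n f) : filP n (hatR K R f) := by
  intro k hk; rw [coeff_hatR, hf k hk, map_zero]

theorem hatR_X_mul (f : PowerSeries A) :
    hatR K R (PowerSeries.X * f) = PowerSeries.X * hatR K R f := by
  ext n
  cases n with
  | zero =>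
      rw [coeff_hatR]
      have h1 : PowerSeries.coeff 0 (PowerSeries.X * f) = 0 := by
        have := filP_mul (B := A) (m := 1) (n := 0)
          (f := (PowerSeries.X : PowerSeries A)) (g := f)
          (fun k hk => by interval_cases k; exact PowerSeries.coeff_zero_X) (filP_top f)
        simpa using this 0 (by omega)
      have h2 : PowerSeries.coeff 0 (PowerSeries.X * hatR K R f) = 0 := by
        have := filP_mul (B := A) (m := 1) (n := 0)
          (f := (PowerSeries.X : PowerSeries A)) (g := hatR K R f)
          (fun k hk => by interval_cases k; exact PowerSeries.coeff_zero_X) (filP_top _)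
        simpa using this 0 (by omega)
      rw [h1, h2, map_zero]
  | succ n =>
      rw [coeff_hatR, PowerSeries.coeff_succ_X_mul, PowerSeries.coeff_succ_X_mul, coeff_hatR]

/-- `R̃` on coefficients, as a linear map. -/
noncomputable def Rta : A →ₗ[K] A := (-lam) • LinearMap.id - R

/-- `R̃` on power series. -/
noncomputable def RtP (f : PowerSeries A) : PowerSeries A := -(lam • f) - hatR K R f

theorem coeff_RtP (f : PowerSeries A) (n : ℕ) :
    PowerSeries.coeff n (RtP K lam R f) = Rta K lam R (PowerSeries.coeff n f) := by
  rw [RtP, map_sub, map_neg, PowerSeries.coeff_smul, coeff_hatR]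
  rw [Rta, LinearMap.sub_apply, LinearMap.smul_apply, LinearMap.id_apply, neg_smul]

theorem RtP_sub (f g : PowerSeries A) :
    RtP K lam R (f - g) = RtP K lam R f - RtP K lam R g := by
  ext n; rw [map_sub, coeff_RtP, coeff_RtP, coeff_RtP, map_sub, map_sub]

theorem RtP_neg (f : PowerSeries A) : RtP K lam R (-f) = -(RtP K lam R f) := by
  ext n; rw [map_neg, coeff_RtP, coeff_RtP, map_neg, map_neg]

theorem filP_RtP {n : ℕ} {f : PowerSeries A} (hf : filP n f) : filP n (RtP K lam R f) := by
  intro k hk; rw [coeff_RtP, hf k hk, map_zero]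

theorem coeff0_RtP {f : PowerSeries A} (hf : PowerSeries.coeff 0 f = 0) :
    PowerSeries.coeff 0 (RtP K lam R f) = 0 := by
  rw [coeff_RtP, hf, map_zero]

/-- double Rota–Baxter product. -/
noncomputable def dmulP (f g : PowerSeries A) : PowerSeries A :=
  hatR K R f * g + f * hatR K R g + lam • (f * g)

/-- left-bracketed `(k+1)`-st power with respect to the double product. -/
noncomputable def dpowP (c : PowerSeries A) : ℕ → PowerSeries A
  | 0 => c
  | k + 1 => dmulP K lam R (dpowP c k) c

/-- `Σ_{j≥1} c^{*j}/j!`. -/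
noncomputable def epsD (c : PowerSeries A) : PowerSeries A :=
  PowerSeries.mk fun n => ∑ k ∈ Finset.range n,
    (((k + 1).factorial : K)⁻¹) • PowerSeries.coeff n (dpowP K lam R c k)

/-- `Σ_{j≥2} c^{*j}/j!`. -/
noncomputable def GD (c : PowerSeries A) : PowerSeries A :=
  PowerSeries.mk fun n => ∑ k ∈ Finset.Ico 1 n,
    (((k + 1).factorial : K)⁻¹) • PowerSeries.coeff n (dpowP K lam R c k)

noncomputable def tauP (c : PowerSeries A) : PowerSeries A :=
  c - PowerSeries.C (PowerSeries.constantCoeff c)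

variable {lam R}

section RB
variable (hRB : ∀ x y : A, R x * R y = R (R x * y + x * R y + lam • (x * y)))
include hRB

theorem hatR_mul (f g : PowerSeries A) :
    hatR K R f * hatR K R g = hatR K R (dmulP K lam R f g) := by
  ext n
  have hd : PowerSeries.coeff n (dmulP K lam R f g)
      = ∑ p ∈ Finset.HasAntidiagonal.antidiagonal n, (R (PowerSeries.coeff p.1 f) * PowerSeries.coeff p.2 g
          + PowerSeries.coeff p.1 f * R (PowerSeries.coeff p.2 g)
          + lam • (PowerSeries.coeff p.1 f * PowerSeries.coeff p.2 g)) := by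
    rw [dmulP, map_add, map_add, PowerSeries.coeff_mul, PowerSeries.coeff_mul,
      PowerSeries.coeff_smul, PowerSeries.coeff_mul, Finset.smul_sum,
      ← Finset.sum_add_distrib, ← Finset.sum_add_distrib]
    apply Finset.sum_congr rfl
    rintro ⟨i, j⟩ _
    rw [coeff_hatR, coeff_hatR]
  rw [PowerSeries.coeff_mul, coeff_hatR, hd, map_sum]
  apply Finset.sum_congr rfl
  rintro ⟨i, j⟩ _
  rw [coeff_hatR, coeff_hatR]
  exact hRB _ _

theorem RtP_dmul (f g : PowerSeries A) :
    RtP K lam R (dmulP K lam R f g) = -(RtP K lam R f * RtP K lam R g) := by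
  have h1 : RtP K lam R f * RtP K lam R g
      = (lam • f + hatR K R f) * (lam • g + hatR K R g) := by
    rw [RtP, RtP]
    have : -(lam • f) - hatR K R f = -(lam • f + hatR K R f) := by abel
    have h2 : -(lam • g) - hatR K R g = -(lam • g + hatR K R g) := by abel
    rw [this, h2, neg_mul_neg]
  rw [h1, RtP, ← hatR_mul K hRB]
  simp only [dmulP, smul_add, add_mul, mul_add, smul_mul_assoc, mul_smul_comm]
  abel

theorem hatR_dpow (c : PowerSeries A) (k : ℕ) :
    hatR K R (dpowP K lam R c k) = (hatR K R c) ^ (k + 1) := by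
  induction k with
  | zero => rw [dpowP, pow_one]
  | succ k ih =>
      rw [dpowP, ← hatR_mul K hRB, ih]
      exact (pow_succ _ _).symm

theorem RtP_dpow (c : PowerSeries A) (k : ℕ) :
    RtP K lam R (dpowP K lam R c k) = -((-(RtP K lam R c)) ^ (k + 1)) := by
  induction k with
  | zero => rw [dpowP, pow_one, neg_neg]
  | succ k ih =>
      rw [dpowP, RtP_dmul K hRB, ih]
      have hps : (-(RtP K lam R c)) ^ (k + 1 + 1)
          = (-(RtP K lam R c)) ^ (k + 1) * (-(RtP K lam R c)) := pow_succ _ _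
      rw [hps, neg_mul, neg_neg, mul_neg, neg_neg]

end RB

theorem filP_dmul {m n : ℕ} {f g : PowerSeries A} (hf : filP m f) (hg : filP n g) :
    filP (m + n) (dmulP K lam R f g) := by
  apply filP_add
  apply filP_add
  · exact filP_mul (filP_hatR K R hf) hg
  · exact filP_mul hf (filP_hatR K R hg)
  · exact filP_smul lam (filP_mul hf hg)

theorem dmulP_sub_left (p p' d : PowerSeries A) :
    dmulP K lam R (p - p') d = dmulP K lam R p d - dmulP K lam R p' d := by
  simp only [dmulP, hatR_sub, sub_mul, mul_sub, smul_sub]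
  abel

theorem dmulP_sub_right (p d d' : PowerSeries A) :
    dmulP K lam R p (d - d') = dmulP K lam R p d - dmulP K lam R p d' := by
  simp only [dmulP, hatR_sub, sub_mul, mul_sub, smul_sub]
  abel

theorem filP_one_iff {f : PowerSeries A} : filP 1 f ↔ PowerSeries.coeff 0 f = 0 := by
  constructor
  · intro h; exact h 0 (by omega)
  · intro h k hk; interval_cases k; exact h

theorem filP_dpow {m : ℕ} {c : PowerSeries A} (hc : filP m c) (k : ℕ) :
    filP ((k + 1) * m) (dpowP K lam R c k) := by
  induction k with
  | zero => rw [dpowP]; simpa using hc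
  | succ k ih =>
      rw [dpowP]
      have h2 : filP ((k + 1) * m + m) (dmulP K lam R (dpowP K lam R c k) c) :=
        filP_dmul K ih hc
      rwa [show (k + 1) * m + m = (k + 1 + 1) * m by ring] at h2

theorem filP1_dpow {c : PowerSeries A} (hc : filP 1 c) (k : ℕ) :
    filP 1 (dpowP K lam R c k) :=
  filP_mono (by omega) (filP_dpow K hc k)

theorem dmulP_cong {n : ℕ} {p p' d d' : PowerSeries A} (hp0 : filP 1 p) (hp0' : filP 1 p')
    (hd0 : filP 1 d) (hd0' : filP 1 d') (hp : filP n (p - p')) (hd : filP n (d - d')) :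
    filP (n + 1) (dmulP K lam R p d - dmulP K lam R p' d') := by
  have heq : dmulP K lam R p d - dmulP K lam R p' d'
      = dmulP K lam R (p - p') d + dmulP K lam R p' (d - d') := by
    rw [dmulP_sub_left, dmulP_sub_right]; abel
  rw [heq]
  apply filP_add
  · exact filP_dmul K hp hd0
  · have h2 : filP (1 + n) (dmulP K lam R p' (d - d')) := filP_dmul K hp0' hd
    rwa [add_comm] at h2

theorem dpow_cong {n : ℕ} {c c' : PowerSeries A} (hc : filP 1 c) (hc' : filP 1 c')
    (h : filP n (c - c')) (k : ℕ) :
    filP (n + 1) (dpowP K lam R c (k + 1) - dpowP K lam R c' (k + 1)) := by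
  induction k with
  | zero =>
      show filP (n + 1) (dmulP K lam R (dpowP K lam R c 0) c
        - dmulP K lam R (dpowP K lam R c' 0) c')
      rw [dpowP, dpowP]
      exact dmulP_cong K hc hc' hc hc' h h
  | succ k ih =>
      show filP (n + 1) (dmulP K lam R (dpowP K lam R c (k + 1)) c
        - dmulP K lam R (dpowP K lam R c' (k + 1)) c')
      exact dmulP_cong K (filP1_dpow K hc _) (filP1_dpow K hc' _) hc hc'
        (filP_mono (Nat.le_succ n) ih) h

theorem GD_cong {n : ℕ} {c c' : PowerSeries A} (hc : filP 1 c) (hc' : filP 1 c')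
    (h : filP n (c - c')) : filP (n + 1) (GD K lam R c - GD K lam R c') := by
  intro j hj
  rw [map_sub, GD, GD, PowerSeries.coeff_mk, PowerSeries.coeff_mk, ← Finset.sum_sub_distrib]
  apply Finset.sum_eq_zero
  intro k hk
  rw [Finset.mem_Ico] at hk
  rw [← smul_sub, ← map_sub]
  cases k with
  | zero => omega
  | succ k0 =>
      rw [dpow_cong K hc hc' h k0 j hj, smul_zero]

theorem coeff_tauP_zero (c : PowerSeries A) : PowerSeries.coeff 0 (tauP c) = 0 := by
  rw [tauP, map_sub, PowerSeries.coeff_zero_C, PowerSeries.coeff_zero_eq_constantCoeff_apply,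
    sub_self]

theorem filP1_tauP (c : PowerSeries A) : filP 1 (tauP c) :=
  filP_one_iff.mpr (coeff_tauP_zero c)

theorem tauP_eq_self {c : PowerSeries A} (hc : PowerSeries.coeff 0 c = 0) : tauP c = c := by
  rw [tauP, show PowerSeries.constantCoeff c = 0 from by
    rw [← PowerSeries.coeff_zero_eq_constantCoeff_apply]; exact hc, map_zero, sub_zero]

theorem filP_tauP_sub {n : ℕ} {c c' : PowerSeries A} (h : filP n (c - c')) :
    filP n (tauP c - tauP c') := by
  intro j hj
  cases j with
  | zero => rw [map_sub, coeff_tauP_zero, coeff_tauP_zero, sub_self]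
  | succ j0 =>
      rw [map_sub, tauP, tauP, map_sub, map_sub, PowerSeries.coeff_C, PowerSeries.coeff_C]
      simp only [Nat.succ_ne_zero, if_false, sub_zero]
      have := h (j0 + 1) hj
      rw [map_sub] at this
      rw [sub_eq_zero] at this
      rw [this, sub_self]

theorem coeff0_GD (c : PowerSeries A) : PowerSeries.coeff 0 (GD K lam R c) = 0 := by
  rw [GD, PowerSeries.coeff_mk]
  simp

theorem coeff0_epsD (c : PowerSeries A) : PowerSeries.coeff 0 (epsD K lam R c) = 0 := by
  rw [epsD, PowerSeries.coeff_mk]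
  simp

theorem epsD_eq_add {c : PowerSeries A} (hc : filP 1 c) :
    epsD K lam R c = c + GD K lam R c := by
  ext n
  rw [epsD, PowerSeries.coeff_mk, map_add, GD, PowerSeries.coeff_mk]
  cases n with
  | zero =>
      rw [filP_one_iff.mp hc]
      simp
  | succ n =>
      rw [Finset.sum_range_succ']
      have h0 : (((0 + 1).factorial : K)⁻¹) • PowerSeries.coeff (n + 1) (dpowP K lam R c 0)
          = PowerSeries.coeff (n + 1) c := by
        rw [dpowP]
        norm_num
      rw [h0, add_comm]
      congr 1
      rw [Finset.sum_Ico_eq_sum_range]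
      simp only [Nat.add_sub_cancel]
      apply Finset.sum_congr rfl
      intro i _
      rw [Nat.add_comm 1 i]

theorem filP_GD {m : ℕ} (hm : 1 ≤ m) {c : PowerSeries A} (hc : filP m c) :
    filP (2 * m) (GD K lam R c) := by
  intro j hj
  rw [GD, PowerSeries.coeff_mk]
  apply Finset.sum_eq_zero
  intro k hk
  rw [Finset.mem_Ico] at hk
  have h2 : 2 * m ≤ (k + 1) * m := Nat.mul_le_mul_right m (by omega)
  rw [filP_dpow K hc k j (by omega), smul_zero]

theorem filP1_GD (c : PowerSeries A) : filP 1 (GD K lam R c) :=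
  filP_one_iff.mpr (coeff0_GD K c)

section RB2
variable (hRB : ∀ x y : A, R x * R y = R (R x * y + x * R y + lam • (x * y)))
include hRB

theorem exp_hatR_eq (c : PowerSeries A) :
    expPS K (hatR K R c) = 1 + hatR K R (epsD K lam R c) := by
  ext n
  rw [map_add, coeff_hatR, epsD, PowerSeries.coeff_mk, map_sum, expPS, PowerSeries.coeff_mk,
    Finset.sum_range_succ']
  have h0 : (((0:ℕ).factorial : K)⁻¹) • PowerSeries.coeff n ((hatR K R c) ^ 0)
      = PowerSeries.coeff n 1 := by
    norm_num
  rw [h0, add_comm]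
  congr 1
  apply Finset.sum_congr rfl
  intro i _
  rw [map_smul, ← coeff_hatR, hatR_dpow K hRB]

theorem exp_negRt_eq (c : PowerSeries A) :
    expPS K (-(RtP K lam R c)) = 1 - RtP K lam R (epsD K lam R c) := by
  ext n
  rw [map_sub, coeff_RtP, epsD, PowerSeries.coeff_mk, map_sum, expPS, PowerSeries.coeff_mk,
    Finset.sum_range_succ']
  have h0 : (((0:ℕ).factorial : K)⁻¹) • PowerSeries.coeff n ((-(RtP K lam R c)) ^ 0)
      = PowerSeries.coeff n 1 := by
    norm_num
  rw [h0]
  have hterm : ∀ i ∈ Finset.range n,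
      Rta K lam R ((((i + 1).factorial : K)⁻¹) • PowerSeries.coeff n (dpowP K lam R c i))
      = -((((i + 1).factorial : K)⁻¹) • PowerSeries.coeff n ((-(RtP K lam R c)) ^ (i + 1))) := by
    intro i _
    rw [map_smul, ← coeff_RtP, RtP_dpow K hRB, map_neg, smul_neg]
  rw [Finset.sum_congr rfl hterm, Finset.sum_neg_distrib, sub_neg_eq_add, add_comm]

end RB2

theorem contr_X {φ : PowerSeries A} (hφ : filP 1 φ) :
    Contr (fun Z => 1 + hatR K R (φ * Z)) := by
  intro n f g h
  show filP (n + 1) ((1 + hatR K R (φ * f)) - (1 + hatR K R (φ * g)))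
  have heq : (1 + hatR K R (φ * f)) - (1 + hatR K R (φ * g)) = hatR K R (φ * (f - g)) := by
    rw [mul_sub, hatR_sub]; abel
  rw [heq]
  apply filP_hatR
  have h2 : filP (1 + n) (φ * (f - g)) := filP_mul hφ h
  rwa [add_comm] at h2

theorem contr_b (w : PowerSeries A) :
    Contr (fun c : PowerSeries A => w - GD K lam R (tauP c)) := by
  intro n f g h
  show filP (n + 1) ((w - GD K lam R (tauP f)) - (w - GD K lam R (tauP g)))
  have heq : (w - GD K lam R (tauP f)) - (w - GD K lam R (tauP g))
      = -(GD K lam R (tauP f) - GD K lam R (tauP g)) := by abel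
  rw [heq]
  exact filP_neg (GD_cong K (filP1_tauP _) (filP1_tauP _) (filP_tauP_sub h))

variable (lam R)

/-- the solution of `X = 1 + R̂(φ·X)`. -/
noncomputable def XfpD (φ : PowerSeries A) : PowerSeries A :=
  fp (fun Z => 1 + hatR K R (φ * Z))

/-- the element `b` with `exp(R̂ b) = X` and `exp(R̃̂ b) = ((1+λφ)X)⁻¹`. -/
noncomputable def bfpD (φ : PowerSeries A) : PowerSeries A :=
  fp (fun c => φ * XfpD K R φ - GD K lam R (tauP c))

variable {lam R}

theorem XfpD_eq {φ : PowerSeries A} (hφ : filP 1 φ) :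
    XfpD K R φ = 1 + hatR K R (φ * XfpD K R φ) :=
  (fp_fixed (contr_X K hφ)).symm

theorem filP1_phiX (φ : PowerSeries A) (hφ : filP 1 φ) (Z : PowerSeries A) :
    filP 1 (φ * Z) := by
  have h2 := filP_mul hφ (filP_top Z)
  rwa [add_zero] at h2

theorem XfpD_sub_one {φ : PowerSeries A} (hφ : filP 1 φ) :
    XfpD K R φ - 1 = hatR K R (φ * XfpD K R φ) := by
  conv_lhs => rw [XfpD_eq K hφ]
  rw [add_sub_cancel_left]

theorem filP_XfpD_sub_one {n : ℕ} {φ : PowerSeries A} (hφ1 : filP 1 φ) (hφ : filP n φ) :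
    filP n (XfpD K R φ - 1) := by
  rw [XfpD_sub_one K hφ1]
  apply filP_hatR
  have h2 := filP_mul hφ (filP_top (XfpD K R φ))
  rwa [add_zero] at h2

theorem bfpD_eq_tau (φ : PowerSeries A) :
    bfpD K lam R φ = φ * XfpD K R φ - GD K lam R (tauP (bfpD K lam R φ)) :=
  (fp_fixed (contr_b K _)).symm

theorem coeff0_bfpD {φ : PowerSeries A} (hφ : filP 1 φ) :
    PowerSeries.coeff 0 (bfpD K lam R φ) = 0 := by
  conv_lhs => rw [bfpD_eq_tau K φ]
  rw [map_sub, coeff0_GD, sub_zero]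
  exact filP1_phiX φ hφ _ 0 (by omega)

theorem filP1_bfpD {φ : PowerSeries A} (hφ : filP 1 φ) : filP 1 (bfpD K lam R φ) :=
  filP_one_iff.mpr (coeff0_bfpD K hφ)

theorem bfpD_eq {φ : PowerSeries A} (hφ : filP 1 φ) :
    bfpD K lam R φ = φ * XfpD K R φ - GD K lam R (bfpD K lam R φ) := by
  conv_lhs => rw [bfpD_eq_tau K φ]
  rw [tauP_eq_self (coeff0_bfpD K hφ)]

theorem epsD_bfpD {φ : PowerSeries A} (hφ : filP 1 φ) :
    epsD K lam R (bfpD K lam R φ) = φ * XfpD K R φ := by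
  rw [epsD_eq_add K (filP1_bfpD K hφ)]
  exact eq_sub_iff_add_eq.mp (bfpD_eq K hφ)

section RB3
variable (hRB : ∀ x y : A, R x * R y = R (R x * y + x * R y + lam • (x * y)))
include hRB

theorem exp_hatR_bfpD {φ : PowerSeries A} (hφ : filP 1 φ) :
    expPS K (hatR K R (bfpD K lam R φ)) = XfpD K R φ := by
  rw [exp_hatR_eq K hRB, epsD_bfpD K hφ, ← XfpD_eq K hφ]

theorem exp_negRt_bfpD {φ : PowerSeries A} (hφ : filP 1 φ) :
    expPS K (-(RtP K lam R (bfpD K lam R φ))) = (1 + lam • φ) * XfpD K R φ := by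
  rw [exp_negRt_eq K hRB, epsD_bfpD K hφ, RtP, ← XfpD_sub_one K hφ]
  rw [add_mul, one_mul, smul_mul_assoc]
  abel

theorem prod_bfpD {φ u : PowerSeries A} (hφ : filP 1 φ)
    (h1 : expPS K (-(lam • u)) * (1 + lam • φ) = 1) :
    expPS K (hatR K R (bfpD K lam R φ)) * expPS K (RtP K lam R (bfpD K lam R φ))
      = expPS K (-(lam • u)) := by
  have hb1 : filP 1 (bfpD K lam R φ) := filP1_bfpD K hφ
  have hRt0 : PowerSeries.coeff 0 (RtP K lam R (bfpD K lam R φ)) = 0 :=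
    coeff0_RtP K lam R (filP_one_iff.mp hb1)
  have hYiY : expPS K (-(RtP K lam R (bfpD K lam R φ)))
      * expPS K (RtP K lam R (bfpD K lam R φ)) = 1 := by
    have h2 := expPS_mul_neg (K := K) (f := -(RtP K lam R (bfpD K lam R φ)))
      (by rw [map_neg, hRt0, neg_zero])
    rwa [neg_neg] at h2
  rw [exp_negRt_bfpD K hRB hφ] at hYiY
  rw [exp_hatR_bfpD K hRB hφ]
  calc XfpD K R φ * expPS K (RtP K lam R (bfpD K lam R φ))
      = 1 * (XfpD K R φ * expPS K (RtP K lam R (bfpD K lam R φ))) := (one_mul _).symm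
    _ = (expPS K (-(lam • u)) * (1 + lam • φ))
          * (XfpD K R φ * expPS K (RtP K lam R (bfpD K lam R φ))) := by rw [h1]
    _ = expPS K (-(lam • u)) * (((1 + lam • φ) * XfpD K R φ)
          * expPS K (RtP K lam R (bfpD K lam R φ))) := by
        rw [mul_assoc, ← mul_assoc (1 + lam • φ)]
    _ = expPS K (-(lam • u)) * 1 := by rw [hYiY]
    _ = expPS K (-(lam • u)) := mul_one _

theorem uniq_b {b b' : PowerSeries A} (hb : filP 1 b) (hb' : filP 1 b')
    (h : expPS K (hatR K R b) * expPS K (RtP K lam R b)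
       = expPS K (hatR K R b') * expPS K (RtP K lam R b')) (hlam : lam ≠ 0) : b = b' := by
  set w := epsD K lam R b with hw
  set w' := epsD K lam R b' with hw'
  set P := expPS K (hatR K R b) * expPS K (RtP K lam R b) with hP
  have hcP : PowerSeries.coeff 0 P = 1 := by
    rw [hP, PowerSeries.coeff_zero_eq_constantCoeff_apply, map_mul,
      ← PowerSeries.coeff_zero_eq_constantCoeff_apply,
      ← PowerSeries.coeff_zero_eq_constantCoeff_apply,
      coeff_zero_expPS, coeff_zero_expPS, one_mul]
  have hP0 : filP 1 (1 - P) := filP_one_iff.mpr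
    (by rw [map_sub, hcP, PowerSeries.coeff_one, if_pos rfl, sub_self])
  have key : ∀ n, filP n (w - w') := by
    intro n
    induction n with
    | zero => exact filP_top _
    | succ n ih =>
        have hE : expPS K (hatR K R b) = P * expPS K (-(RtP K lam R b)) := by
          rw [hP, mul_assoc, expPS_mul_neg (coeff0_RtP K lam R (filP_one_iff.mp hb)), mul_one]
        have hE' : expPS K (hatR K R b') = P * expPS K (-(RtP K lam R b')) := by
          rw [h, mul_assoc, expPS_mul_neg (coeff0_RtP K lam R (filP_one_iff.mp hb')), mul_one]
        have h3 : (1 : PowerSeries A) + hatR K R w = P * (1 - RtP K lam R w) := by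
          rw [hw, ← exp_hatR_eq K hRB b, ← exp_negRt_eq K hRB b]
          exact hE
        have h3' : (1 : PowerSeries A) + hatR K R w' = P * (1 - RtP K lam R w') := by
          rw [hw', ← exp_hatR_eq K hRB b', ← exp_negRt_eq K hRB b']
          exact hE'
        have h4 : hatR K R (w - w') = -(P * RtP K lam R (w - w')) := by
          have e3 : hatR K R (w - w') = (1 + hatR K R w) - (1 + hatR K R w') := by
            rw [hatR_sub]; abel
          rw [e3, h3, h3', RtP_sub, mul_sub, mul_sub, mul_sub]
          abel
        have h5 : -(lam • (w - w')) = (1 - P) * RtP K lam R (w - w') := by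
          have e4 : hatR K R (w - w') + RtP K lam R (w - w') = -(lam • (w - w')) := by
            rw [RtP]; abel
          rw [← e4, h4, sub_mul, one_mul]
          abel
        intro k hk
        have h6 : filP (n + 1) ((1 - P) * RtP K lam R (w - w')) := by
          have h7 := filP_mul hP0 (filP_RtP K lam R ih)
          rwa [add_comm] at h7
        have h8 := h6 k hk
        rw [← h5, map_neg, PowerSeries.coeff_smul, neg_eq_zero] at h8
        have h9 := congrArg (fun y : A => lam⁻¹ • y) h8
        simpa [smul_smul, inv_mul_cancel₀ hlam] using h9
  have hww : w = w' := eq_of_forall_filP_sub key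
  apply eq_of_forall_filP_sub
  intro n
  induction n with
  | zero => exact filP_top _
  | succ n ih =>
      have e5 : b = w - GD K lam R b := by
        rw [hw, epsD_eq_add K hb]
        abel
      have e6 : b' = w - GD K lam R b' := by
        rw [hww, hw', epsD_eq_add K hb']
        abel
      have e7 : b - b' = GD K lam R b' - GD K lam R b := by
        conv_lhs => rw [e5, e6]
        abel
      have ih' : filP n (b' - b) := by
        have h10 := filP_neg ih
        rwa [neg_sub] at h10
      rw [e7]
      exact GD_cong K hb' hb ih'

end RB3

theorem filP_pow_mul {n : ℕ} {f : PowerSeries A} (hf : filP n f) (j : ℕ) :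
    filP (j * n) (f ^ j) := by
  induction j with
  | zero => rw [pow_zero]; intro k hk; omega
  | succ j ih =>
      rw [pow_succ]
      have h2 := filP_mul ih hf
      rwa [show j * n + n = (j + 1) * n by ring] at h2

theorem exp_sub_one_sub {n : ℕ} (hn : 1 ≤ n) {f : PowerSeries A} (hf : filP n f) :
    filP (2 * n) (expPS K f - 1 - f) := by
  intro k hk
  rw [map_sub, map_sub]
  rcases Nat.eq_zero_or_pos k with hk0 | hk0
  · subst hk0
    rw [coeff_zero_expPS, PowerSeries.coeff_one, if_pos rfl, hf 0 (by omega), sub_zero, sub_self]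
  · have hs : PowerSeries.coeff k (expPS K f)
        = ∑ j ∈ Finset.range 2, ((j.factorial : K)⁻¹) • PowerSeries.coeff k (f ^ j) := by
      rw [expPS, PowerSeries.coeff_mk]
      symm
      apply Finset.sum_subset
      · intro x hx; rw [Finset.mem_range] at hx ⊢; omega
      · intro j hj hj2
        rw [Finset.mem_range] at hj hj2
        have h2n : 2 * n ≤ j * n := Nat.mul_le_mul_right n (by omega)
        rw [filP_pow_mul hf j k (by omega), smul_zero]
    rw [hs, Finset.sum_range_succ, Finset.sum_range_one, pow_zero, pow_one]
    norm_num

theorem phi1_fil1 (u : PowerSeries A) :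
    filP 1 (lam⁻¹ • (expPS K (lam • u) - 1)) := by
  rw [filP_one_iff, PowerSeries.coeff_smul, map_sub, coeff_zero_expPS, PowerSeries.coeff_one,
    if_pos rfl, sub_self, smul_zero]

theorem phi_sub_u {n : ℕ} (hlam : lam ≠ 0) (hn : 1 ≤ n) {u : PowerSeries A} (hu : filP n u) :
    filP (2 * n) (lam⁻¹ • (expPS K (lam • u) - 1) - u) := by
  have heq : lam⁻¹ • (expPS K (lam • u) - 1) - u
      = lam⁻¹ • (expPS K (lam • u) - 1 - lam • u) := by
    rw [smul_sub lam⁻¹ (expPS K (lam • u) - 1) (lam • u), inv_smul_smul₀ hlam]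
  rw [heq]
  exact filP_smul _ (exp_sub_one_sub K hn (filP_smul lam hu))

theorem phi_fil_n {n : ℕ} (hlam : lam ≠ 0) (hn : 1 ≤ n) {u : PowerSeries A} (hu : filP n u) :
    filP n (lam⁻¹ • (expPS K (lam • u) - 1)) := by
  have heq : lam⁻¹ • (expPS K (lam • u) - 1)
      = (lam⁻¹ • (expPS K (lam • u) - 1) - u) + u := by abel
  rw [heq]
  exact filP_add (filP_mono (by omega) (phi_sub_u K hlam hn hu)) hu

theorem one_add_lam_phi (hlam : lam ≠ 0) (u : PowerSeries A) :
    (1 : PowerSeries A) + lam • (lam⁻¹ • (expPS K (lam • u) - 1)) = expPS K (lam • u) := by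
  rw [smul_inv_smul₀ hlam, add_comm, sub_add_cancel]

theorem exp_neg_mul_exp (u : PowerSeries A) (hu : PowerSeries.coeff 0 u = 0) :
    expPS K (-(lam • u)) * expPS K (lam • u) = 1 := by
  have h2 := expPS_mul_neg (K := K) (f := -(lam • u))
    (by rw [map_neg, PowerSeries.coeff_smul, hu, smul_zero, neg_zero])
  rwa [neg_neg] at h2

theorem bfpD_sub_u {n : ℕ} (hn : 1 ≤ n) {u φ : PowerSeries A} (hφ1 : filP 1 φ)
    (hφn : filP n φ) (hφu : filP (2 * n) (φ - u)) :
    filP (2 * n) (bfpD K lam R φ - u) := by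
  have hX1 : filP n (XfpD K R φ - 1) := filP_XfpD_sub_one K hφ1 hφn
  have hwφ : filP (2 * n) (φ * XfpD K R φ - φ) := by
    have heq : φ * XfpD K R φ - φ = φ * (XfpD K R φ - 1) := by rw [mul_sub, mul_one]
    rw [heq]
    have h2 := filP_mul hφn hX1
    rwa [← two_mul] at h2
  have hwu : filP (2 * n) (φ * XfpD K R φ - u) := by
    have heq : φ * XfpD K R φ - u = (φ * XfpD K R φ - φ) + (φ - u) := by abel
    rw [heq]
    exact filP_add hwφ hφu
  have hwfn : filP n (φ * XfpD K R φ) := by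
    have h2 := filP_mul hφn (filP_top (XfpD K R φ))
    rwa [add_zero] at h2
  have hbfil : ∀ m, m ≤ n → filP m (bfpD K lam R φ) := by
    intro m
    induction m with
    | zero => intro _; exact filP_top _
    | succ m ih =>
        intro hmn
        have hbm : filP m (bfpD K lam R φ) := ih (by omega)
        rcases Nat.eq_zero_or_pos m with hm0 | hm0
        · subst hm0; exact filP1_bfpD K hφ1
        · have hG : filP (2 * m) (GD K lam R (bfpD K lam R φ)) := filP_GD K hm0 hbm
          intro k hk
          conv_lhs => rw [bfpD_eq K hφ1]
          rw [map_sub, hwfn k (by omega), hG k (by omega), sub_zero]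
  have hbn : filP n (bfpD K lam R φ) := hbfil n le_rfl
  have hGb : filP (2 * n) (GD K lam R (bfpD K lam R φ)) := filP_GD K hn hbn
  have heq : bfpD K lam R φ - u
      = -(GD K lam R (bfpD K lam R φ)) + (φ * XfpD K R φ - u) := by
    conv_lhs => rw [bfpD_eq K hφ1]
    abel
  rw [heq]
  exact filP_add (filP_neg hGb) hwu

theorem ELprime (hlam : lam ≠ 0) (a : A) :
    expPS K (-(logPS K (1 + lam • (PowerSeries.C a * PowerSeries.X))))
      * (1 + lam • (PowerSeries.C a * PowerSeries.X)) = 1 := by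
  have hξ : PowerSeries.coeff 0 (lam • (PowerSeries.X : PowerSeries K)) = 0 := by
    rw [PowerSeries.coeff_smul, PowerSeries.coeff_zero_X, smul_zero]
  have hK := exp_neg_log_mul (K := K) hξ
  have h2 := congrArg (theta (A := A) a) hK
  rw [theta_mul, theta_one, theta_expPS, theta_neg, theta_logPS, theta_add, theta_one,
    theta_smul, theta_X] at h2
  exact h2

end Main
end SpitzerAux


open SpitzerAux

/-- non-commutative Spitzer identity. For a Rota–Baxter algebra `(A, R)` of
weight `lam ≠ 0` over a field `K` of characteristic zero, the power series ring `A⟦t⟧`, with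
the filtration `Fil n = tⁿA⟦t⟧` and the coefficientwise extension `R̂` of `R`, is a complete
filtered Rota–Baxter algebra of weight `lam`; there is a unique map
`χ_lam : tA⟦t⟧ → tA⟦t⟧` with `(χ_lam - id)(tⁿA⟦t⟧) ⊆ t²ⁿA⟦t⟧` and
`exp(R̂(χ_lam u)) * exp(R̃̂(χ_lam u)) = exp(-lam • u)`; and for every `a ∈ A` the element
`X := exp(R̂(χ_lam(lam⁻¹ • log(1 + lam·t·a))))` satisfies `X = 1 + t·R̂(a·X)`. -/
theorem noncommutative_spitzer_identity {K A : Type*} [Field K] [CharZero K]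
    [Ring A] [Algebra K A] (lam : K) (hlam : lam ≠ 0) (R : A →ₗ[K] A)
    (hRB : ∀ x y : A, R x * R y = R (R x * y + x * R y + lam • (x * y))) :
    -- the filtration `Fil n = tⁿA⟦t⟧`, described by vanishing of low coefficients
    let Fil : ℕ → PowerSeries A → Prop := fun n f => ∀ k < n, PowerSeries.coeff k f = 0
    -- `A⟦t⟧` is a complete filtered Rota–Baxter algebra of weight `lam`:
    ((∀ m n : ℕ, ∀ f g : PowerSeries A, Fil m f → Fil n g → Fil (m + n) (f * g)) ∧
     (∀ f : PowerSeries A, (∀ n : ℕ, Fil n f) → f = 0) ∧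
     (∀ a : ℕ → PowerSeries A, (∀ n, Fil n (a n)) →
        ∃ s : PowerSeries A, ∀ N : ℕ, Fil N (s - ∑ n ∈ Finset.range N, a n)) ∧
     (∀ n : ℕ, ∀ f : PowerSeries A, Fil n f → Fil n (hatR K R f)) ∧
     (∀ f g : PowerSeries A, hatR K R f * hatR K R g =
        hatR K R (hatR K R f * g + f * hatR K R g + lam • (f * g)))) ∧
    -- unique BCH-recursion map `χ_lam` on `tA⟦t⟧`
    (∃! χ : {f : PowerSeries A // PowerSeries.coeff 0 f = 0} →
             {f : PowerSeries A // PowerSeries.coeff 0 f = 0},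
      (∀ n : ℕ, 1 ≤ n → ∀ u : {f : PowerSeries A // PowerSeries.coeff 0 f = 0}, Fil n u.1 →
          Fil (2 * n) ((χ u).1 - u.1)) ∧
      (∀ u : {f : PowerSeries A // PowerSeries.coeff 0 f = 0},
        expPS K (hatR K R (χ u).1) *
          expPS K (-(lam • (χ u).1) - hatR K R (χ u).1) =
        expPS K (-(lam • u.1)))) ∧
    -- Spitzer identity for the BCH-recursion map
    (∀ χ : {f : PowerSeries A // PowerSeries.coeff 0 f = 0} →
            {f : PowerSeries A // PowerSeries.coeff 0 f = 0},
      (∀ n : ℕ, 1 ≤ n → ∀ u : {f : PowerSeries A // PowerSeries.coeff 0 f = 0}, Fil n u.1 →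
          Fil (2 * n) ((χ u).1 - u.1)) →
      (∀ u : {f : PowerSeries A // PowerSeries.coeff 0 f = 0},
        expPS K (hatR K R (χ u).1) *
          expPS K (-(lam • (χ u).1) - hatR K R (χ u).1) =
        expPS K (-(lam • u.1))) →
      ∀ a : A,
        expPS K (hatR K R (χ ⟨lam⁻¹ •
            logPS K (1 + lam • (PowerSeries.C a * PowerSeries.X)), by simp [logPS]⟩)) =
          1 + PowerSeries.X * hatR K R (PowerSeries.C a *
            expPS K (hatR K R (χ ⟨lam⁻¹ •
              logPS K (1 + lam • (PowerSeries.C a * PowerSeries.X)), by simp [logPS]⟩)))) := by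
  intro Fil
  refine ⟨⟨?_, ?_, ?_, ?_, ?_⟩, ?_, ?_⟩
  · exact fun m n f g hf hg => filP_mul hf hg
  · exact fun f hf => filP_eq_zero hf
  · intro a ha
    refine ⟨PowerSeries.mk fun n => ∑ m ∈ Finset.range (n + 1), PowerSeries.coeff n (a m), ?_⟩
    intro N k hk
    rw [map_sub, PowerSeries.coeff_mk, map_sum]
    have hsum : (∑ n ∈ Finset.range N, PowerSeries.coeff k (a n))
        = ∑ m ∈ Finset.range (k + 1), PowerSeries.coeff k (a m) := by
      symm
      apply Finset.sum_subset
      · intro x hx; rw [Finset.mem_range] at hx ⊢; omega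
      · intro m _ hm2
        rw [Finset.mem_range, not_lt] at hm2
        exact ha m k (by omega)
    rw [hsum, sub_self]
  · exact fun n f hf => filP_hatR K R hf
  · exact fun f g => by simpa only [dmulP] using hatR_mul K hRB f g
  · -- existence and uniqueness of χ
    refine ⟨fun u => ⟨bfpD K lam R (lam⁻¹ • (expPS K (lam • u.1) - 1)),
      coeff0_bfpD K (phi1_fil1 K u.1)⟩, ⟨?_, ?_⟩, ?_⟩
    · intro n hn u hu
      exact bfpD_sub_u K hn (phi1_fil1 K u.1) (phi_fil_n K hlam hn hu)
        (phi_sub_u K hlam hn hu)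
    · intro u
      have h1 : expPS K (-(lam • u.1))
          * (1 + lam • (lam⁻¹ • (expPS K (lam • u.1) - 1))) = 1 := by
        rw [one_add_lam_phi K hlam u.1]
        exact exp_neg_mul_exp K u.1 u.2
      have h2 := prod_bfpD K hRB (phi1_fil1 K u.1) h1
      simpa only [RtP] using h2
    · intro χ' hχ'
      funext u
      apply Subtype.ext
      have hb' : filP 1 (χ' u).1 := filP_one_iff.mpr (χ' u).2
      have hb0 : filP 1 (bfpD K lam R (lam⁻¹ • (expPS K (lam • u.1) - 1))) :=
        filP1_bfpD K (phi1_fil1 K u.1)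
      have e1 : expPS K (hatR K R (χ' u).1) * expPS K (RtP K lam R (χ' u).1)
          = expPS K (-(lam • u.1)) := by
        simpa only [RtP] using hχ'.2 u
      have h1 : expPS K (-(lam • u.1))
          * (1 + lam • (lam⁻¹ • (expPS K (lam • u.1) - 1))) = 1 := by
        rw [one_add_lam_phi K hlam u.1]
        exact exp_neg_mul_exp K u.1 u.2
      have e2 := prod_bfpD K hRB (phi1_fil1 K u.1) h1
      exact uniq_b K hRB hb' hb0 (e1.trans e2.symm) hlam
  · -- Spitzer identity
    intro χ hA hB a
    have hφ1 : filP 1 (PowerSeries.C a * PowerSeries.X) := by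
      rw [filP_one_iff, PowerSeries.coeff_zero_eq_constantCoeff_apply, map_mul,
        PowerSeries.constantCoeff_X, mul_zero]
    have hlog : lam • (lam⁻¹ • logPS K (1 + lam • (PowerSeries.C a * PowerSeries.X)))
        = logPS K (1 + lam • (PowerSeries.C a * PowerSeries.X)) := smul_inv_smul₀ hlam _
    have h1 : expPS K (-(lam • (lam⁻¹ •
          logPS K (1 + lam • (PowerSeries.C a * PowerSeries.X)))))
        * (1 + lam • (PowerSeries.C a * PowerSeries.X)) = 1 := by
      rw [hlog]
      exact ELprime K hlam a
    have e2 := prod_bfpD K hRB hφ1 h1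
    have hbb : ∀ (pf : PowerSeries.coeff 0 (lam⁻¹ •
          logPS K (1 + lam • (PowerSeries.C a * PowerSeries.X))) = 0),
        (χ ⟨lam⁻¹ • logPS K (1 + lam • (PowerSeries.C a * PowerSeries.X)), pf⟩).1
          = bfpD K lam R (PowerSeries.C a * PowerSeries.X) := by
      intro pf
      have hb1 : filP 1 (χ ⟨lam⁻¹ •
          logPS K (1 + lam • (PowerSeries.C a * PowerSeries.X)), pf⟩).1 :=
        filP_one_iff.mpr (χ _).2
      have e1 : expPS K (hatR K R (χ ⟨lam⁻¹ •
            logPS K (1 + lam • (PowerSeries.C a * PowerSeries.X)), pf⟩).1)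
          * expPS K (RtP K lam R (χ ⟨lam⁻¹ •
            logPS K (1 + lam • (PowerSeries.C a * PowerSeries.X)), pf⟩).1)
          = expPS K (-(lam • (lam⁻¹ •
            logPS K (1 + lam • (PowerSeries.C a * PowerSeries.X))))) := by
        simpa only [RtP] using hB ⟨lam⁻¹ •
          logPS K (1 + lam • (PowerSeries.C a * PowerSeries.X)), pf⟩
      exact uniq_b K hRB hb1 (filP1_bfpD K hφ1) (e1.trans e2.symm) hlam
    rw [hbb, exp_hatR_bfpD K hRB hφ1]
    have hc : PowerSeries.C a * PowerSeries.X
          * XfpD K R (PowerSeries.C a * PowerSeries.X)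
        = PowerSeries.X * (PowerSeries.C a
          * XfpD K R (PowerSeries.C a * PowerSeries.X)) := by
      rw [(PowerSeries.commute_X (PowerSeries.C a)).eq, mul_assoc]
    conv_lhs => rw [XfpD_eq K hφ1]
    rw [hc, hatR_X_mul]
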